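/- The real subspace Cl^R_even(1,3) ⊕ iCl^R_odd(1,3) of the complex Clifford algebra Cl(1,3) is closed under multiplication and is isomorphic as a real algebra to Mat(4,ℝ). -/

import Mathlib

open CliffordAlgebra

noncomputable def Q13 : QuadraticForm ℂ (Fin 4 → ℂ) :=
  QuadraticMap.weightedSumSquares ℂ (fun a : Fin 4 => if a = 0 then (1 : ℂ) else -1)

noncomputable def e (a : Fin 4) : CliffordAlgebra Q13 := ι Q13 (Pi.single a 1)

noncomputable def blade (s : Finset (Fin 4)) : CliffordAlgebra Q13 :=
  ((s.sort (· ≤ ·)).map e).prod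

/-- The real subspace Cl^ℝ_even(1,3) ⊕ iCl^ℝ_odd(1,3). -/
noncomputable def evenIOdd : Submodule ℝ (CliffordAlgebra Q13) :=
  Submodule.span ℝ
    ((blade '' {s | Even s.card}) ∪
      ((fun x => (Complex.I : ℂ) • x) '' (blade '' {s | ¬ Even s.card})))

noncomputable section AuxCl

lemma Q13_single (a : Fin 4) : Q13 (Pi.single a 1) = if a = 0 then 1 else -1 := by
  simp [Q13, QuadraticMap.weightedSumSquares_apply, Pi.single_apply]

lemma e_sq (a : Fin 4) : e a * e a = algebraMap ℂ _ (if a = 0 then 1 else -1) := by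
  rw [e, ι_sq_scalar, Q13_single]

set_option maxHeartbeats 1000000 in
lemma e_anticomm {a b : Fin 4} (h : a ≠ b) : e a * e b = -(e b * e a) := by
  have key := ι_mul_ι_add_swap (Q := Q13) (Pi.single a 1) (Pi.single b 1)
  have hp : QuadraticMap.polar (⇑Q13) (Pi.single a 1) (Pi.single b 1) = 0 := by
    fin_cases a <;> fin_cases b <;> first
      | exact absurd rfl h
      | simp [QuadraticMap.polar, Q13, QuadraticMap.weightedSumSquares_apply,
          Fin.sum_univ_four, Pi.single_apply]
  rw [hp, map_zero, add_eq_zero_iff_eq_neg] at key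
  exact key

def P (l : List (Fin 4)) : CliffordAlgebra Q13 := (l.map e).prod

lemma P_nil : P [] = 1 := rfl
lemma P_cons (a : Fin 4) (l : List (Fin 4)) : P (a :: l) = e a * P l := by
  simp [P]

lemma blade_eq_P {l : List (Fin 4)} (hl : l.Pairwise (· < ·)) : blade l.toFinset = P l := by
  rw [blade, ← P]
  congr 1
  exact (List.toFinset_sort (· ≤ ·) hl.nodup).mpr (hl.imp fun h => le_of_lt h)

lemma straighten (l : List (Fin 4)) (hl : l.Pairwise (· < ·)) (a : Fin 4) :
    ∃ (c : ℂ) (l₂ : List (Fin 4)), l₂.Pairwise (· < ·) ∧ (∀ x ∈ l₂, x = a ∨ x ∈ l) ∧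
      e a * P l = c • P l₂ := by
  induction l with
  | nil =>
      exact ⟨1, [a], List.pairwise_singleton _ a, by simp, by simp [P]⟩
  | cons b l' ih =>
      have hbl' : ∀ x ∈ l', b < x := fun x hx => (List.pairwise_cons.mp hl).1 x hx
      have hl' : l'.Pairwise (· < ·) := (List.pairwise_cons.mp hl).2
      rcases lt_trichotomy a b with hab | hab | hab
      · refine ⟨1, a :: b :: l', ?_, by simp +contextual [or_assoc], by simp [P_cons]⟩
        exact List.pairwise_cons.mpr ⟨fun x hx => by
          rcases List.mem_cons.mp hx with rfl | hx
          · exact hab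
          · exact hab.trans (hbl' x hx), hl⟩
      · subst hab
        refine ⟨(if a = 0 then 1 else -1), l', hl', fun x hx => Or.inr (by simp [hx]), ?_⟩
        rw [P_cons, ← mul_assoc, e_sq, Algebra.algebraMap_eq_smul_one, smul_mul_assoc, one_mul]
      · obtain ⟨c, l₂, hs, hmem, heq⟩ := ih hl'
        have hbl₂ : ∀ x ∈ l₂, b < x := by
          intro x hx
          rcases hmem x hx with rfl | hx
          · exact hab
          · exact hbl' x hx
        refine ⟨-c, b :: l₂, List.pairwise_cons.mpr ⟨hbl₂, hs⟩, ?_, ?_⟩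
        · intro x hx
          rcases List.mem_cons.mp hx with rfl | hx
          · simp
          · rcases hmem x hx with rfl | h
            · exact Or.inl rfl
            · exact Or.inr (by simp [h])
        · have hne : a ≠ b := ne_of_gt hab
          rw [P_cons, ← mul_assoc, e_anticomm hne, neg_mul, mul_assoc, heq, P_cons]
          rw [mul_smul_comm, neg_smul]

abbrev B : Submodule ℂ (CliffordAlgebra Q13) := Submodule.span ℂ (Set.range blade)

lemma P_sorted_mem {l : List (Fin 4)} (hl : l.Pairwise (· < ·)) : P l ∈ B :=
  blade_eq_P hl ▸ Submodule.subset_span ⟨l.toFinset, rfl⟩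

lemma e_mul_mem {x : CliffordAlgebra Q13} (a : Fin 4) (hx : x ∈ B) : e a * x ∈ B := by
  induction hx using Submodule.span_induction with
  | mem y hy =>
      obtain ⟨s, rfl⟩ := hy
      have hsorted : (s.sort (· ≤ ·)).Pairwise (· < ·) := (Finset.sortedLT_sort s).pairwise
      obtain ⟨c, l₂, hs2, _, heq⟩ := straighten (s.sort (· ≤ ·)) hsorted a
      have : blade s = P (s.sort (· ≤ ·)) := by rw [blade, P]
      rw [this, heq]
      exact Submodule.smul_mem _ _ (P_sorted_mem hs2)
  | zero => simp
  | add y z _ _ hy hz => rw [mul_add]; exact Submodule.add_mem _ hy hz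
  | smul c y _ hy => rw [mul_smul_comm]; exact Submodule.smul_mem _ _ hy

lemma P_mem (l : List (Fin 4)) : P l ∈ B := by
  induction l with
  | nil => exact P_sorted_mem List.Pairwise.nil
  | cons a l ih => rw [P_cons]; exact e_mul_mem a ih

lemma mul_mem_B {x y : CliffordAlgebra Q13} (hx : x ∈ B) (hy : y ∈ B) : x * y ∈ B := by
  induction hx using Submodule.span_induction with
  | mem u hu =>
      obtain ⟨s, rfl⟩ := hu
      induction hy using Submodule.span_induction with
      | mem v hv =>
          obtain ⟨t, rfl⟩ := hv
          have : blade s * blade t = P (s.sort (· ≤ ·) ++ t.sort (· ≤ ·)) := by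
            rw [blade, blade, P, List.map_append, List.prod_append]
          rw [this]; exact P_mem _
      | zero => simp
      | add u v _ _ h1 h2 => rw [mul_add]; exact Submodule.add_mem _ h1 h2
      | smul c u _ h1 => rw [mul_smul_comm]; exact Submodule.smul_mem _ _ h1
  | zero => simp
  | add u v _ _ h1 h2 => rw [add_mul]; exact Submodule.add_mem _ h1 h2
  | smul c u _ h1 => rw [smul_mul_assoc]; exact Submodule.smul_mem _ _ h1

lemma B_eq_top : B = ⊤ := by
  rw [eq_top_iff]
  rintro x -
  induction x using CliffordAlgebra.induction with
  | algebraMap r =>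
      rw [Algebra.algebraMap_eq_smul_one]
      exact Submodule.smul_mem _ _ (by simpa [blade, P_nil] using P_sorted_mem List.Pairwise.nil)
  | ι v =>
      have hv : v = ∑ a : Fin 4, v a • (Pi.single a 1 : Fin 4 → ℂ) := by
        ext j
        simp [Pi.single_apply, Finset.sum_ite_eq (Finset.univ : Finset (Fin 4)) j]
      have : (ι Q13) v = ∑ a : Fin 4, v a • e a := by
        simp only [e]
        conv_lhs => rw [hv]
        rw [map_sum]
        simp only [map_smul]
      rw [this]
      refine Submodule.sum_mem _ fun a _ => Submodule.smul_mem _ _ ?_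
      have : e a = P [a] := by simp [P]
      rw [this]
      exact P_sorted_mem (List.pairwise_singleton _ a)
  | mul x y hx hy => exact mul_mem_B hx hy
  | add x y hx hy => exact Submodule.add_mem _ hx hy

def γ : Fin 4 → Matrix (Fin 4) (Fin 4) ℝ
  | 0 => !![0,0,1,0; 0,0,0,1; -1,0,0,0; 0,-1,0,0]
  | 1 => !![1,0,0,0; 0,1,0,0; 0,0,-1,0; 0,0,0,-1]
  | 2 => !![0,0,1,0; 0,0,0,-1; 1,0,0,0; 0,-1,0,0]
  | 3 => !![0,0,0,1; 0,0,1,0; 0,1,0,0; 1,0,0,0]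

def m (s : Finset (Fin 4)) : Matrix (Fin 4) (Fin 4) ℝ := ((s.sort (· ≤ ·)).map γ).prod

lemma mem_m (s : Finset (Fin 4)) : m s ∈ Submodule.span ℝ (Set.range m) :=
  Submodule.subset_span ⟨s, rfl⟩

lemma m_e : m (∅ : Finset (Fin 4)) = !![1, 0, 0, 0; 0, 1, 0, 0; 0, 0, 1, 0; 0, 0, 0, 1] := by
  have h1 : (∅ : Finset (Fin 4)) = ([] : List (Fin 4)).toFinset := by decide
  rw [m, h1, (List.toFinset_sort (· ≤ ·) (by decide)).mpr (by decide)]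
  rw [← Matrix.ext_iff]
  simp [γ, Matrix.mul_apply, Fin.sum_univ_four, Fin.forall_fin_succ, Matrix.one_apply]

lemma m_0 : m ({0} : Finset (Fin 4)) = !![0, 0, 1, 0; 0, 0, 0, 1; -1, 0, 0, 0; 0, -1, 0, 0] := by
  have h1 : ({0} : Finset (Fin 4)) = ([0] : List (Fin 4)).toFinset := by decide
  rw [m, h1, (List.toFinset_sort (· ≤ ·) (by decide)).mpr (by decide)]
  rw [← Matrix.ext_iff]
  simp [γ, Matrix.mul_apply, Fin.sum_univ_four, Fin.forall_fin_succ, Matrix.one_apply]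

lemma m_1 : m ({1} : Finset (Fin 4)) = !![1, 0, 0, 0; 0, 1, 0, 0; 0, 0, -1, 0; 0, 0, 0, -1] := by
  have h1 : ({1} : Finset (Fin 4)) = ([1] : List (Fin 4)).toFinset := by decide
  rw [m, h1, (List.toFinset_sort (· ≤ ·) (by decide)).mpr (by decide)]
  rw [← Matrix.ext_iff]
  simp [γ, Matrix.mul_apply, Fin.sum_univ_four, Fin.forall_fin_succ, Matrix.one_apply]

lemma m_2 : m ({2} : Finset (Fin 4)) = !![0, 0, 1, 0; 0, 0, 0, -1; 1, 0, 0, 0; 0, -1, 0, 0] := by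
  have h1 : ({2} : Finset (Fin 4)) = ([2] : List (Fin 4)).toFinset := by decide
  rw [m, h1, (List.toFinset_sort (· ≤ ·) (by decide)).mpr (by decide)]
  rw [← Matrix.ext_iff]
  simp [γ, Matrix.mul_apply, Fin.sum_univ_four, Fin.forall_fin_succ, Matrix.one_apply]

lemma m_3 : m ({3} : Finset (Fin 4)) = !![0, 0, 0, 1; 0, 0, 1, 0; 0, 1, 0, 0; 1, 0, 0, 0] := by
  have h1 : ({3} : Finset (Fin 4)) = ([3] : List (Fin 4)).toFinset := by decide
  rw [m, h1, (List.toFinset_sort (· ≤ ·) (by decide)).mpr (by decide)]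
  rw [← Matrix.ext_iff]
  simp [γ, Matrix.mul_apply, Fin.sum_univ_four, Fin.forall_fin_succ, Matrix.one_apply]

lemma m_01 : m ({0,1} : Finset (Fin 4)) = !![0, 0, -1, 0; 0, 0, 0, -1; -1, 0, 0, 0; 0, -1, 0, 0] := by
  have h1 : ({0,1} : Finset (Fin 4)) = ([0,1] : List (Fin 4)).toFinset := by decide
  rw [m, h1, (List.toFinset_sort (· ≤ ·) (by decide)).mpr (by decide)]
  rw [← Matrix.ext_iff]
  simp [γ, Matrix.mul_apply, Fin.sum_univ_four, Fin.forall_fin_succ, Matrix.one_apply]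

lemma m_02 : m ({0,2} : Finset (Fin 4)) = !![1, 0, 0, 0; 0, -1, 0, 0; 0, 0, -1, 0; 0, 0, 0, 1] := by
  have h1 : ({0,2} : Finset (Fin 4)) = ([0,2] : List (Fin 4)).toFinset := by decide
  rw [m, h1, (List.toFinset_sort (· ≤ ·) (by decide)).mpr (by decide)]
  rw [← Matrix.ext_iff]
  simp [γ, Matrix.mul_apply, Fin.sum_univ_four, Fin.forall_fin_succ, Matrix.one_apply]

lemma m_03 : m ({0,3} : Finset (Fin 4)) = !![0, 1, 0, 0; 1, 0, 0, 0; 0, 0, 0, -1; 0, 0, -1, 0] := by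
  have h1 : ({0,3} : Finset (Fin 4)) = ([0,3] : List (Fin 4)).toFinset := by decide
  rw [m, h1, (List.toFinset_sort (· ≤ ·) (by decide)).mpr (by decide)]
  rw [← Matrix.ext_iff]
  simp [γ, Matrix.mul_apply, Fin.sum_univ_four, Fin.forall_fin_succ, Matrix.one_apply]

lemma m_12 : m ({1,2} : Finset (Fin 4)) = !![0, 0, 1, 0; 0, 0, 0, -1; -1, 0, 0, 0; 0, 1, 0, 0] := by
  have h1 : ({1,2} : Finset (Fin 4)) = ([1,2] : List (Fin 4)).toFinset := by decide
  rw [m, h1, (List.toFinset_sort (· ≤ ·) (by decide)).mpr (by decide)]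
  rw [← Matrix.ext_iff]
  simp [γ, Matrix.mul_apply, Fin.sum_univ_four, Fin.forall_fin_succ, Matrix.one_apply]

lemma m_13 : m ({1,3} : Finset (Fin 4)) = !![0, 0, 0, 1; 0, 0, 1, 0; 0, -1, 0, 0; -1, 0, 0, 0] := by
  have h1 : ({1,3} : Finset (Fin 4)) = ([1,3] : List (Fin 4)).toFinset := by decide
  rw [m, h1, (List.toFinset_sort (· ≤ ·) (by decide)).mpr (by decide)]
  rw [← Matrix.ext_iff]
  simp [γ, Matrix.mul_apply, Fin.sum_univ_four, Fin.forall_fin_succ, Matrix.one_apply]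

lemma m_23 : m ({2,3} : Finset (Fin 4)) = !![0, 1, 0, 0; -1, 0, 0, 0; 0, 0, 0, 1; 0, 0, -1, 0] := by
  have h1 : ({2,3} : Finset (Fin 4)) = ([2,3] : List (Fin 4)).toFinset := by decide
  rw [m, h1, (List.toFinset_sort (· ≤ ·) (by decide)).mpr (by decide)]
  rw [← Matrix.ext_iff]
  simp [γ, Matrix.mul_apply, Fin.sum_univ_four, Fin.forall_fin_succ, Matrix.one_apply]

lemma m_012 : m ({0,1,2} : Finset (Fin 4)) = !![-1, 0, 0, 0; 0, 1, 0, 0; 0, 0, -1, 0; 0, 0, 0, 1] := by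
  have h1 : ({0,1,2} : Finset (Fin 4)) = ([0,1,2] : List (Fin 4)).toFinset := by decide
  rw [m, h1, (List.toFinset_sort (· ≤ ·) (by decide)).mpr (by decide)]
  rw [← Matrix.ext_iff]
  simp [γ, Matrix.mul_apply, Fin.sum_univ_four, Fin.forall_fin_succ, Matrix.one_apply]

lemma m_013 : m ({0,1,3} : Finset (Fin 4)) = !![0, -1, 0, 0; -1, 0, 0, 0; 0, 0, 0, -1; 0, 0, -1, 0] := by
  have h1 : ({0,1,3} : Finset (Fin 4)) = ([0,1,3] : List (Fin 4)).toFinset := by decide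
  rw [m, h1, (List.toFinset_sort (· ≤ ·) (by decide)).mpr (by decide)]
  rw [← Matrix.ext_iff]
  simp [γ, Matrix.mul_apply, Fin.sum_univ_four, Fin.forall_fin_succ, Matrix.one_apply]

lemma m_023 : m ({0,2,3} : Finset (Fin 4)) = !![0, 0, 0, 1; 0, 0, -1, 0; 0, -1, 0, 0; 1, 0, 0, 0] := by
  have h1 : ({0,2,3} : Finset (Fin 4)) = ([0,2,3] : List (Fin 4)).toFinset := by decide
  rw [m, h1, (List.toFinset_sort (· ≤ ·) (by decide)).mpr (by decide)]
  rw [← Matrix.ext_iff]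
  simp [γ, Matrix.mul_apply, Fin.sum_univ_four, Fin.forall_fin_succ, Matrix.one_apply]

lemma m_123 : m ({1,2,3} : Finset (Fin 4)) = !![0, 1, 0, 0; -1, 0, 0, 0; 0, 0, 0, -1; 0, 0, 1, 0] := by
  have h1 : ({1,2,3} : Finset (Fin 4)) = ([1,2,3] : List (Fin 4)).toFinset := by decide
  rw [m, h1, (List.toFinset_sort (· ≤ ·) (by decide)).mpr (by decide)]
  rw [← Matrix.ext_iff]
  simp [γ, Matrix.mul_apply, Fin.sum_univ_four, Fin.forall_fin_succ, Matrix.one_apply]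

lemma m_0123 : m ({0,1,2,3} : Finset (Fin 4)) = !![0, 0, 0, -1; 0, 0, 1, 0; 0, -1, 0, 0; 1, 0, 0, 0] := by
  have h1 : ({0,1,2,3} : Finset (Fin 4)) = ([0,1,2,3] : List (Fin 4)).toFinset := by decide
  rw [m, h1, (List.toFinset_sort (· ≤ ·) (by decide)).mpr (by decide)]
  rw [← Matrix.ext_iff]
  simp [γ, Matrix.mul_apply, Fin.sum_univ_four, Fin.forall_fin_succ, Matrix.one_apply]

lemma sb_00 : Matrix.single (0:Fin 4) (0:Fin 4) (1:ℝ) ∈ Submodule.span ℝ (Set.range m) := by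
  have hcomb : Matrix.single (0:Fin 4) (0:Fin 4) (1:ℝ) = ((1/4 : ℝ) • m (∅ : Finset (Fin 4))) + ((1/4 : ℝ) • m ({1} : Finset (Fin 4))) + ((1/4 : ℝ) • m ({0,2} : Finset (Fin 4))) + ((-1/4 : ℝ) • m ({0,1,2} : Finset (Fin 4))) := by
    rw [m_e, m_1, m_02, m_012, ← Matrix.ext_iff]
    norm_num [Fin.forall_fin_succ, Matrix.single, Matrix.of_apply]
    all_goals decide
  rw [hcomb]
  exact (Submodule.add_mem _ (Submodule.add_mem _ (Submodule.add_mem _ (Submodule.smul_mem _ _ (mem_m _)) (Submodule.smul_mem _ _ (mem_m _))) (Submodule.smul_mem _ _ (mem_m _))) (Submodule.smul_mem _ _ (mem_m _)))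

lemma sb_01 : Matrix.single (0:Fin 4) (1:Fin 4) (1:ℝ) ∈ Submodule.span ℝ (Set.range m) := by
  have hcomb : Matrix.single (0:Fin 4) (1:Fin 4) (1:ℝ) = ((1/4 : ℝ) • m ({0,3} : Finset (Fin 4))) + ((1/4 : ℝ) • m ({2,3} : Finset (Fin 4))) + ((-1/4 : ℝ) • m ({0,1,3} : Finset (Fin 4))) + ((1/4 : ℝ) • m ({1,2,3} : Finset (Fin 4))) := by
    rw [m_03, m_23, m_013, m_123, ← Matrix.ext_iff]
    norm_num [Fin.forall_fin_succ, Matrix.single, Matrix.of_apply]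
    all_goals decide
  rw [hcomb]
  exact (Submodule.add_mem _ (Submodule.add_mem _ (Submodule.add_mem _ (Submodule.smul_mem _ _ (mem_m _)) (Submodule.smul_mem _ _ (mem_m _))) (Submodule.smul_mem _ _ (mem_m _))) (Submodule.smul_mem _ _ (mem_m _)))

lemma sb_02 : Matrix.single (0:Fin 4) (2:Fin 4) (1:ℝ) ∈ Submodule.span ℝ (Set.range m) := by
  have hcomb : Matrix.single (0:Fin 4) (2:Fin 4) (1:ℝ) = ((1/4 : ℝ) • m ({0} : Finset (Fin 4))) + ((1/4 : ℝ) • m ({2} : Finset (Fin 4))) + ((-1/4 : ℝ) • m ({0,1} : Finset (Fin 4))) + ((1/4 : ℝ) • m ({1,2} : Finset (Fin 4))) := by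
    rw [m_0, m_2, m_01, m_12, ← Matrix.ext_iff]
    norm_num [Fin.forall_fin_succ, Matrix.single, Matrix.of_apply]
    all_goals decide
  rw [hcomb]
  exact (Submodule.add_mem _ (Submodule.add_mem _ (Submodule.add_mem _ (Submodule.smul_mem _ _ (mem_m _)) (Submodule.smul_mem _ _ (mem_m _))) (Submodule.smul_mem _ _ (mem_m _))) (Submodule.smul_mem _ _ (mem_m _)))

lemma sb_03 : Matrix.single (0:Fin 4) (3:Fin 4) (1:ℝ) ∈ Submodule.span ℝ (Set.range m) := by
  have hcomb : Matrix.single (0:Fin 4) (3:Fin 4) (1:ℝ) = ((1/4 : ℝ) • m ({3} : Finset (Fin 4))) + ((1/4 : ℝ) • m ({1,3} : Finset (Fin 4))) + ((1/4 : ℝ) • m ({0,2,3} : Finset (Fin 4))) + ((-1/4 : ℝ) • m ({0,1,2,3} : Finset (Fin 4))) := by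
    rw [m_3, m_13, m_023, m_0123, ← Matrix.ext_iff]
    norm_num [Fin.forall_fin_succ, Matrix.single, Matrix.of_apply]
    all_goals decide
  rw [hcomb]
  exact (Submodule.add_mem _ (Submodule.add_mem _ (Submodule.add_mem _ (Submodule.smul_mem _ _ (mem_m _)) (Submodule.smul_mem _ _ (mem_m _))) (Submodule.smul_mem _ _ (mem_m _))) (Submodule.smul_mem _ _ (mem_m _)))

lemma sb_10 : Matrix.single (1:Fin 4) (0:Fin 4) (1:ℝ) ∈ Submodule.span ℝ (Set.range m) := by
  have hcomb : Matrix.single (1:Fin 4) (0:Fin 4) (1:ℝ) = ((1/4 : ℝ) • m ({0,3} : Finset (Fin 4))) + ((-1/4 : ℝ) • m ({2,3} : Finset (Fin 4))) + ((-1/4 : ℝ) • m ({0,1,3} : Finset (Fin 4))) + ((-1/4 : ℝ) • m ({1,2,3} : Finset (Fin 4))) := by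
    rw [m_03, m_23, m_013, m_123, ← Matrix.ext_iff]
    norm_num [Fin.forall_fin_succ, Matrix.single, Matrix.of_apply]
    all_goals decide
  rw [hcomb]
  exact (Submodule.add_mem _ (Submodule.add_mem _ (Submodule.add_mem _ (Submodule.smul_mem _ _ (mem_m _)) (Submodule.smul_mem _ _ (mem_m _))) (Submodule.smul_mem _ _ (mem_m _))) (Submodule.smul_mem _ _ (mem_m _)))

lemma sb_11 : Matrix.single (1:Fin 4) (1:Fin 4) (1:ℝ) ∈ Submodule.span ℝ (Set.range m) := by
  have hcomb : Matrix.single (1:Fin 4) (1:Fin 4) (1:ℝ) = ((1/4 : ℝ) • m (∅ : Finset (Fin 4))) + ((1/4 : ℝ) • m ({1} : Finset (Fin 4))) + ((-1/4 : ℝ) • m ({0,2} : Finset (Fin 4))) + ((1/4 : ℝ) • m ({0,1,2} : Finset (Fin 4))) := by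
    rw [m_e, m_1, m_02, m_012, ← Matrix.ext_iff]
    norm_num [Fin.forall_fin_succ, Matrix.single, Matrix.of_apply]
    all_goals decide
  rw [hcomb]
  exact (Submodule.add_mem _ (Submodule.add_mem _ (Submodule.add_mem _ (Submodule.smul_mem _ _ (mem_m _)) (Submodule.smul_mem _ _ (mem_m _))) (Submodule.smul_mem _ _ (mem_m _))) (Submodule.smul_mem _ _ (mem_m _)))

lemma sb_12 : Matrix.single (1:Fin 4) (2:Fin 4) (1:ℝ) ∈ Submodule.span ℝ (Set.range m) := by
  have hcomb : Matrix.single (1:Fin 4) (2:Fin 4) (1:ℝ) = ((1/4 : ℝ) • m ({3} : Finset (Fin 4))) + ((1/4 : ℝ) • m ({1,3} : Finset (Fin 4))) + ((-1/4 : ℝ) • m ({0,2,3} : Finset (Fin 4))) + ((1/4 : ℝ) • m ({0,1,2,3} : Finset (Fin 4))) := by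
    rw [m_3, m_13, m_023, m_0123, ← Matrix.ext_iff]
    norm_num [Fin.forall_fin_succ, Matrix.single, Matrix.of_apply]
    all_goals decide
  rw [hcomb]
  exact (Submodule.add_mem _ (Submodule.add_mem _ (Submodule.add_mem _ (Submodule.smul_mem _ _ (mem_m _)) (Submodule.smul_mem _ _ (mem_m _))) (Submodule.smul_mem _ _ (mem_m _))) (Submodule.smul_mem _ _ (mem_m _)))

lemma sb_13 : Matrix.single (1:Fin 4) (3:Fin 4) (1:ℝ) ∈ Submodule.span ℝ (Set.range m) := by
  have hcomb : Matrix.single (1:Fin 4) (3:Fin 4) (1:ℝ) = ((1/4 : ℝ) • m ({0} : Finset (Fin 4))) + ((-1/4 : ℝ) • m ({2} : Finset (Fin 4))) + ((-1/4 : ℝ) • m ({0,1} : Finset (Fin 4))) + ((-1/4 : ℝ) • m ({1,2} : Finset (Fin 4))) := by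
    rw [m_0, m_2, m_01, m_12, ← Matrix.ext_iff]
    norm_num [Fin.forall_fin_succ, Matrix.single, Matrix.of_apply]
    all_goals decide
  rw [hcomb]
  exact (Submodule.add_mem _ (Submodule.add_mem _ (Submodule.add_mem _ (Submodule.smul_mem _ _ (mem_m _)) (Submodule.smul_mem _ _ (mem_m _))) (Submodule.smul_mem _ _ (mem_m _))) (Submodule.smul_mem _ _ (mem_m _)))

lemma sb_20 : Matrix.single (2:Fin 4) (0:Fin 4) (1:ℝ) ∈ Submodule.span ℝ (Set.range m) := by
  have hcomb : Matrix.single (2:Fin 4) (0:Fin 4) (1:ℝ) = ((-1/4 : ℝ) • m ({0} : Finset (Fin 4))) + ((1/4 : ℝ) • m ({2} : Finset (Fin 4))) + ((-1/4 : ℝ) • m ({0,1} : Finset (Fin 4))) + ((-1/4 : ℝ) • m ({1,2} : Finset (Fin 4))) := by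
    rw [m_0, m_2, m_01, m_12, ← Matrix.ext_iff]
    norm_num [Fin.forall_fin_succ, Matrix.single, Matrix.of_apply]
    all_goals decide
  rw [hcomb]
  exact (Submodule.add_mem _ (Submodule.add_mem _ (Submodule.add_mem _ (Submodule.smul_mem _ _ (mem_m _)) (Submodule.smul_mem _ _ (mem_m _))) (Submodule.smul_mem _ _ (mem_m _))) (Submodule.smul_mem _ _ (mem_m _)))

lemma sb_21 : Matrix.single (2:Fin 4) (1:Fin 4) (1:ℝ) ∈ Submodule.span ℝ (Set.range m) := by
  have hcomb : Matrix.single (2:Fin 4) (1:Fin 4) (1:ℝ) = ((1/4 : ℝ) • m ({3} : Finset (Fin 4))) + ((-1/4 : ℝ) • m ({1,3} : Finset (Fin 4))) + ((-1/4 : ℝ) • m ({0,2,3} : Finset (Fin 4))) + ((-1/4 : ℝ) • m ({0,1,2,3} : Finset (Fin 4))) := by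
    rw [m_3, m_13, m_023, m_0123, ← Matrix.ext_iff]
    norm_num [Fin.forall_fin_succ, Matrix.single, Matrix.of_apply]
    all_goals decide
  rw [hcomb]
  exact (Submodule.add_mem _ (Submodule.add_mem _ (Submodule.add_mem _ (Submodule.smul_mem _ _ (mem_m _)) (Submodule.smul_mem _ _ (mem_m _))) (Submodule.smul_mem _ _ (mem_m _))) (Submodule.smul_mem _ _ (mem_m _)))

lemma sb_22 : Matrix.single (2:Fin 4) (2:Fin 4) (1:ℝ) ∈ Submodule.span ℝ (Set.range m) := by
  have hcomb : Matrix.single (2:Fin 4) (2:Fin 4) (1:ℝ) = ((1/4 : ℝ) • m (∅ : Finset (Fin 4))) + ((-1/4 : ℝ) • m ({1} : Finset (Fin 4))) + ((-1/4 : ℝ) • m ({0,2} : Finset (Fin 4))) + ((-1/4 : ℝ) • m ({0,1,2} : Finset (Fin 4))) := by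
    rw [m_e, m_1, m_02, m_012, ← Matrix.ext_iff]
    norm_num [Fin.forall_fin_succ, Matrix.single, Matrix.of_apply]
    all_goals decide
  rw [hcomb]
  exact (Submodule.add_mem _ (Submodule.add_mem _ (Submodule.add_mem _ (Submodule.smul_mem _ _ (mem_m _)) (Submodule.smul_mem _ _ (mem_m _))) (Submodule.smul_mem _ _ (mem_m _))) (Submodule.smul_mem _ _ (mem_m _)))

lemma sb_23 : Matrix.single (2:Fin 4) (3:Fin 4) (1:ℝ) ∈ Submodule.span ℝ (Set.range m) := by
  have hcomb : Matrix.single (2:Fin 4) (3:Fin 4) (1:ℝ) = ((-1/4 : ℝ) • m ({0,3} : Finset (Fin 4))) + ((1/4 : ℝ) • m ({2,3} : Finset (Fin 4))) + ((-1/4 : ℝ) • m ({0,1,3} : Finset (Fin 4))) + ((-1/4 : ℝ) • m ({1,2,3} : Finset (Fin 4))) := by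
    rw [m_03, m_23, m_013, m_123, ← Matrix.ext_iff]
    norm_num [Fin.forall_fin_succ, Matrix.single, Matrix.of_apply]
    all_goals decide
  rw [hcomb]
  exact (Submodule.add_mem _ (Submodule.add_mem _ (Submodule.add_mem _ (Submodule.smul_mem _ _ (mem_m _)) (Submodule.smul_mem _ _ (mem_m _))) (Submodule.smul_mem _ _ (mem_m _))) (Submodule.smul_mem _ _ (mem_m _)))

lemma sb_30 : Matrix.single (3:Fin 4) (0:Fin 4) (1:ℝ) ∈ Submodule.span ℝ (Set.range m) := by
  have hcomb : Matrix.single (3:Fin 4) (0:Fin 4) (1:ℝ) = ((1/4 : ℝ) • m ({3} : Finset (Fin 4))) + ((-1/4 : ℝ) • m ({1,3} : Finset (Fin 4))) + ((1/4 : ℝ) • m ({0,2,3} : Finset (Fin 4))) + ((1/4 : ℝ) • m ({0,1,2,3} : Finset (Fin 4))) := by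
    rw [m_3, m_13, m_023, m_0123, ← Matrix.ext_iff]
    norm_num [Fin.forall_fin_succ, Matrix.single, Matrix.of_apply]
    all_goals decide
  rw [hcomb]
  exact (Submodule.add_mem _ (Submodule.add_mem _ (Submodule.add_mem _ (Submodule.smul_mem _ _ (mem_m _)) (Submodule.smul_mem _ _ (mem_m _))) (Submodule.smul_mem _ _ (mem_m _))) (Submodule.smul_mem _ _ (mem_m _)))

lemma sb_31 : Matrix.single (3:Fin 4) (1:Fin 4) (1:ℝ) ∈ Submodule.span ℝ (Set.range m) := by
  have hcomb : Matrix.single (3:Fin 4) (1:Fin 4) (1:ℝ) = ((-1/4 : ℝ) • m ({0} : Finset (Fin 4))) + ((-1/4 : ℝ) • m ({2} : Finset (Fin 4))) + ((-1/4 : ℝ) • m ({0,1} : Finset (Fin 4))) + ((1/4 : ℝ) • m ({1,2} : Finset (Fin 4))) := by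
    rw [m_0, m_2, m_01, m_12, ← Matrix.ext_iff]
    norm_num [Fin.forall_fin_succ, Matrix.single, Matrix.of_apply]
    all_goals decide
  rw [hcomb]
  exact (Submodule.add_mem _ (Submodule.add_mem _ (Submodule.add_mem _ (Submodule.smul_mem _ _ (mem_m _)) (Submodule.smul_mem _ _ (mem_m _))) (Submodule.smul_mem _ _ (mem_m _))) (Submodule.smul_mem _ _ (mem_m _)))

lemma sb_32 : Matrix.single (3:Fin 4) (2:Fin 4) (1:ℝ) ∈ Submodule.span ℝ (Set.range m) := by
  have hcomb : Matrix.single (3:Fin 4) (2:Fin 4) (1:ℝ) = ((-1/4 : ℝ) • m ({0,3} : Finset (Fin 4))) + ((-1/4 : ℝ) • m ({2,3} : Finset (Fin 4))) + ((-1/4 : ℝ) • m ({0,1,3} : Finset (Fin 4))) + ((1/4 : ℝ) • m ({1,2,3} : Finset (Fin 4))) := by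
    rw [m_03, m_23, m_013, m_123, ← Matrix.ext_iff]
    norm_num [Fin.forall_fin_succ, Matrix.single, Matrix.of_apply]
    all_goals decide
  rw [hcomb]
  exact (Submodule.add_mem _ (Submodule.add_mem _ (Submodule.add_mem _ (Submodule.smul_mem _ _ (mem_m _)) (Submodule.smul_mem _ _ (mem_m _))) (Submodule.smul_mem _ _ (mem_m _))) (Submodule.smul_mem _ _ (mem_m _)))

lemma sb_33 : Matrix.single (3:Fin 4) (3:Fin 4) (1:ℝ) ∈ Submodule.span ℝ (Set.range m) := by
  have hcomb : Matrix.single (3:Fin 4) (3:Fin 4) (1:ℝ) = ((1/4 : ℝ) • m (∅ : Finset (Fin 4))) + ((-1/4 : ℝ) • m ({1} : Finset (Fin 4))) + ((1/4 : ℝ) • m ({0,2} : Finset (Fin 4))) + ((1/4 : ℝ) • m ({0,1,2} : Finset (Fin 4))) := by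
    rw [m_e, m_1, m_02, m_012, ← Matrix.ext_iff]
    norm_num [Fin.forall_fin_succ, Matrix.single, Matrix.of_apply]
    all_goals decide
  rw [hcomb]
  exact (Submodule.add_mem _ (Submodule.add_mem _ (Submodule.add_mem _ (Submodule.smul_mem _ _ (mem_m _)) (Submodule.smul_mem _ _ (mem_m _))) (Submodule.smul_mem _ _ (mem_m _))) (Submodule.smul_mem _ _ (mem_m _)))

lemma span_m : Submodule.span ℝ (Set.range m) = ⊤ := by
  rw [eq_top_iff]
  intro M _
  rw [Matrix.matrix_eq_sum_single M]
  refine Submodule.sum_mem _ fun i _ => Submodule.sum_mem _ fun j _ => ?_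
  have : Matrix.single i j (M i j) = (M i j) • Matrix.single i j 1 := by
    rw [Matrix.smul_single, smul_eq_mul, mul_one]
  rw [this]
  refine Submodule.smul_mem _ _ ?_
  fin_cases i <;> fin_cases j <;>
    first
      | exact sb_00 | exact sb_01 | exact sb_02 | exact sb_03
      | exact sb_10 | exact sb_11 | exact sb_12 | exact sb_13
      | exact sb_20 | exact sb_21 | exact sb_22 | exact sb_23
      | exact sb_30 | exact sb_31 | exact sb_32 | exact sb_33

def g (a : Fin 4) : Matrix (Fin 4) (Fin 4) ℂ := Complex.I • (γ a).map (Complex.ofReal)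

def lmap : (Fin 4 → ℂ) →ₗ[ℂ] Matrix (Fin 4) (Fin 4) ℂ :=
  ∑ a : Fin 4, LinearMap.smulRight (LinearMap.proj a) (g a)

lemma lmap_apply (v : Fin 4 → ℂ) : lmap v = ∑ a : Fin 4, v a • g a := by
  simp [lmap]

set_option maxHeartbeats 2000000 in
lemma lmap_sq (v : Fin 4 → ℂ) : lmap v * lmap v = algebraMap ℂ _ (Q13 v) := by
  rw [lmap_apply]
  have hQ : Q13 v = v 0 * v 0 - v 1 * v 1 - v 2 * v 2 - v 3 * v 3 := by
    simp [Q13, QuadraticMap.weightedSumSquares_apply, Fin.sum_univ_four]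
    ring
  rw [hQ]
  ext i j
  fin_cases i <;> fin_cases j <;>
    simp [Matrix.mul_apply, Fin.sum_univ_four, g, γ, Matrix.algebraMap_matrix_apply,
      Matrix.vecHead, Matrix.vecTail, Function.comp, Complex.ext_iff] <;>
    constructor <;> ring

def F : CliffordAlgebra Q13 →ₐ[ℂ] Matrix (Fin 4) (Fin 4) ℂ :=
  CliffordAlgebra.lift Q13 ⟨lmap, lmap_sq⟩

lemma F_e (a : Fin 4) : F (e a) = Complex.I • (γ a).map Complex.ofReal := by
  rw [e, F, CliffordAlgebra.lift_ι_apply, lmap_apply]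
  rw [show ∑ b : Fin 4, (Pi.single a 1 : Fin 4 → ℂ) b • g b = g a from ?_]
  · rfl
  · rw [Finset.sum_eq_single a (fun b _ hba => by simp [Pi.single_apply, hba.symm])
      (by simp)]
    simp

lemma F_P (l : List (Fin 4)) :
    F (P l) = (Complex.I ^ l.length) • ((l.map γ).prod).map Complex.ofReal := by
  induction l with
  | nil =>
      simp only [P_nil, map_one, List.map_nil, List.prod_nil, List.length_nil, pow_zero, one_smul]
      rw [Matrix.map_one _ Complex.ofReal_zero Complex.ofReal_one]
  | cons a l ih =>
      rw [P_cons, map_mul, F_e, ih, List.map_cons, List.prod_cons, List.length_cons,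
        smul_mul_smul_comm, ← pow_succ']
      congr 1
      exact (Matrix.map_mul (L := γ a) (M := (l.map γ).prod) (f := Complex.ofRealHom)).symm

lemma F_blade (s : Finset (Fin 4)) :
    F (blade s) = (Complex.I ^ s.card) • (m s).map Complex.ofReal := by
  have h1 : blade s = P (s.sort (· ≤ ·)) := rfl
  have h2 : m s = ((s.sort (· ≤ ·)).map γ).prod := rfl
  rw [h1, h2, F_P, Finset.length_sort]

lemma I_pow_pm {n : ℕ} (h : Even n) : Complex.I ^ n = 1 ∨ Complex.I ^ n = -1 := by
  obtain ⟨k, rfl⟩ := h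
  rw [← two_mul, pow_mul, Complex.I_sq]
  rcases Nat.even_or_odd k with hk | hk
  · exact Or.inl hk.neg_one_pow
  · exact Or.inr hk.neg_one_pow

-- real-linear maps between matrix spaces
def phiL : Matrix (Fin 4) (Fin 4) ℝ →ₗ[ℝ] Matrix (Fin 4) (Fin 4) ℂ where
  toFun A := A.map Complex.ofReal
  map_add' A B := by ext i j; simp
  map_smul' r A := by ext i j; simp [Complex.real_smul]

def reL : Matrix (Fin 4) (Fin 4) ℂ →ₗ[ℝ] Matrix (Fin 4) (Fin 4) ℝ where
  toFun M := M.map Complex.re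
  map_add' A B := by ext i j; simp
  map_smul' r A := by ext i j; simp [Complex.smul_re]

lemma reL_phiL (A : Matrix (Fin 4) (Fin 4) ℝ) : reL (phiL A) = A := by
  ext i j; simp [reL, phiL]

lemma phiL_mul (A B : Matrix (Fin 4) (Fin 4) ℝ) : phiL (A * B) = phiL A * phiL B := by
  show (A * B).map Complex.ofRealHom = A.map Complex.ofRealHom * B.map Complex.ofRealHom
  exact Matrix.map_mul

def Fr : CliffordAlgebra Q13 →ₗ[ℝ] Matrix (Fin 4) (Fin 4) ℂ :=
  LinearMap.restrictScalars ℝ F.toLinearMap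

lemma Fr_apply (x : CliffordAlgebra Q13) : Fr x = F x := rfl

-- generators
def gen (s : Finset (Fin 4)) : CliffordAlgebra Q13 :=
  if Even s.card then blade s else Complex.I • blade s

lemma genset_eq :
    ((blade '' {s | Even s.card}) ∪
      ((fun x => (Complex.I : ℂ) • x) '' (blade '' {s | ¬ Even s.card}))) = Set.range gen := by
  ext x
  constructor
  · rintro (⟨s, hs, rfl⟩ | ⟨y, ⟨s, hs, rfl⟩, rfl⟩)
    · exact ⟨s, by rw [gen, if_pos (show Even s.card from hs)]⟩
    · exact ⟨s, by rw [gen, if_neg (show ¬ Even s.card from hs)]⟩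
  · rintro ⟨s, rfl⟩
    by_cases h : Even s.card
    · exact Or.inl ⟨s, h, (by rw [gen, if_pos h] : gen s = blade s).symm⟩
    · exact Or.inr ⟨blade s, ⟨s, h, rfl⟩, (by rw [gen, if_neg h] : gen s = _).symm⟩

lemma evenIOdd_eq : evenIOdd = Submodule.span ℝ (Set.range gen) := by
  rw [evenIOdd, genset_eq]

lemma F_gen (s : Finset (Fin 4)) :
    ∃ ε : ℝ, (ε = 1 ∨ ε = -1) ∧ Fr (gen s) = phiL (ε • m s) := by
  have hps : ∀ (ε : ℝ), phiL (ε • m s) = (ε : ℂ) • (m s).map Complex.ofReal := by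
    intro ε; ext i j; simp [phiL, Complex.real_smul]
  have main : ∀ (c : ℂ), (c = 1 ∨ c = -1) → Fr (gen s) = c • (m s).map Complex.ofReal →
      ∃ ε : ℝ, (ε = 1 ∨ ε = -1) ∧ Fr (gen s) = phiL (ε • m s) := by
    rintro c (rfl | rfl) hc
    · exact ⟨1, Or.inl rfl, by rw [hc, hps]; norm_num⟩
    · exact ⟨-1, Or.inr rfl, by rw [hc, hps]; norm_num⟩
  by_cases h : Even s.card
  · have hF : Fr (gen s) = Complex.I ^ s.card • (m s).map Complex.ofReal := by
      rw [Fr_apply, gen, if_pos h, F_blade]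
    exact main _ (I_pow_pm h) hF
  · have hF : Fr (gen s) = Complex.I ^ (s.card + 1) • (m s).map Complex.ofReal := by
      rw [Fr_apply, gen, if_neg h, map_smul, F_blade, smul_smul, ← pow_succ']
    exact main _ (I_pow_pm (by simpa [Nat.even_add_one] using h)) hF

lemma gen_mem (s : Finset (Fin 4)) : gen s ∈ evenIOdd := by
  rw [evenIOdd_eq]
  exact Submodule.subset_span ⟨s, rfl⟩

lemma hmap : Submodule.map Fr evenIOdd = LinearMap.range phiL := by
  apply le_antisymm
  · rw [evenIOdd_eq, Submodule.map_span, Submodule.span_le]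
    rintro y ⟨x, ⟨s, rfl⟩, rfl⟩
    obtain ⟨ε, _, hF⟩ := F_gen s
    exact ⟨ε • m s, hF.symm⟩
  · rintro y ⟨A, rfl⟩
    have hA : A ∈ Submodule.span ℝ (Set.range m) := by rw [span_m]; trivial
    induction hA using Submodule.span_induction with
    | mem u hu =>
        obtain ⟨s, rfl⟩ := hu
        obtain ⟨ε, hε, hF⟩ := F_gen s
        have hphi : phiL (m s) = Fr (ε • gen s) := by
          rw [map_smul, hF, map_smul, smul_smul]
          rcases hε with rfl | rfl <;> norm_num
        rw [hphi]
        exact Submodule.mem_map_of_mem (Submodule.smul_mem _ _ (gen_mem s))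
    | zero => simp
    | add u v _ _ h1 h2 => rw [map_add]; exact Submodule.add_mem _ h1 h2
    | smul r u _ h1 => rw [map_smul]; exact Submodule.smul_mem _ _ h1

-- surjectivity and injectivity of F
lemma F_surj_aux : LinearMap.range F.toLinearMap = ⊤ := by
  rw [eq_top_iff]
  have h1 : ∀ s : Finset (Fin 4), (m s).map Complex.ofReal ∈ LinearMap.range F.toLinearMap := by
    intro s
    have hb : F (blade s) ∈ LinearMap.range F.toLinearMap := ⟨blade s, rfl⟩
    have := Submodule.smul_mem (LinearMap.range F.toLinearMap) ((Complex.I ^ s.card)⁻¹) hb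
    rwa [F_blade, smul_smul, inv_mul_cancel₀ (pow_ne_zero _ Complex.I_ne_zero), one_smul]
      at this
  have h2 : ∀ A : Matrix (Fin 4) (Fin 4) ℝ,
      A.map Complex.ofReal ∈ LinearMap.range F.toLinearMap := by
    intro A
    have hA : A ∈ Submodule.span ℝ (Set.range m) := by rw [span_m]; trivial
    induction hA using Submodule.span_induction with
    | mem u hu => obtain ⟨s, rfl⟩ := hu; exact h1 s
    | zero => simpa using Submodule.zero_mem _
    | add u v _ _ hu hv =>
        have : (u + v).map Complex.ofReal = u.map Complex.ofReal + v.map Complex.ofReal := by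
          ext i j; simp
        rw [this]; exact Submodule.add_mem _ hu hv
    | smul r u _ hu =>
        have : (r • u).map Complex.ofReal = (r : ℂ) • u.map Complex.ofReal := by
          ext i j; simp [Complex.real_smul]
        rw [this]; exact Submodule.smul_mem _ _ hu
  rintro M -
  have hdecomp : M = (M.map Complex.re).map Complex.ofReal +
      Complex.I • (M.map Complex.im).map Complex.ofReal := by
    ext i j
    simp only [Matrix.add_apply, Matrix.smul_apply, Matrix.map_apply, smul_eq_mul]
    rw [mul_comm]
    exact (Complex.re_add_im _).symm
  rw [hdecomp]
  exact Submodule.add_mem _ (h2 _) (Submodule.smul_mem _ _ (h2 _))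

lemma F_surj : Function.Surjective F := LinearMap.range_eq_top.mp F_surj_aux

instance : Module.Finite ℂ (CliffordAlgebra Q13) :=
  ⟨Submodule.fg_def.mpr ⟨Set.range blade, Set.finite_range _, B_eq_top⟩⟩

lemma F_inj : Function.Injective F := by
  have hB := B_eq_top
  classical
  have hle : Module.finrank ℂ (CliffordAlgebra Q13) ≤ 16 := by
    rw [← finrank_top ℂ (CliffordAlgebra Q13), ← hB]
    refine le_trans (finrank_span_le_card _) ?_
    rw [Set.toFinset_range]
    exact le_trans (Finset.card_image_le) (by simp)
  have h16 : Module.finrank ℂ (Matrix (Fin 4) (Fin 4) ℂ) = 16 := by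
    rw [Module.finrank_matrix]
    simp
  have hrk := LinearMap.finrank_range_add_finrank_ker F.toLinearMap
  rw [F_surj_aux, finrank_top, h16] at hrk
  have hker : Module.finrank ℂ (LinearMap.ker F.toLinearMap) = 0 := by omega
  have : LinearMap.ker F.toLinearMap = ⊥ := Submodule.finrank_eq_zero.mp hker
  exact LinearMap.ker_eq_bot.mp this

end AuxCl

/-- Cl^ℝ_even(1,3) ⊕ iCl^ℝ_odd(1,3) is closed under multiplication and is
isomorphic, as a real algebra, to Mat(4,ℝ). -/
theorem evenIOdd_closed_and_iso_mat4R :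
    (∀ u ∈ evenIOdd, ∀ v ∈ evenIOdd, u * v ∈ evenIOdd) ∧
    ∃ f : CliffordAlgebra Q13 →ₗ[ℝ] Matrix (Fin 4) (Fin 4) ℝ,
      Set.BijOn f (evenIOdd : Set (CliffordAlgebra Q13)) Set.univ ∧
      (∀ u ∈ evenIOdd, ∀ v ∈ evenIOdd, f (u * v) = f u * f v) ∧
      f 1 = 1 := by
  have getA : ∀ u ∈ evenIOdd, ∃ A, phiL A = F u := by
    intro u hu
    have : Fr u ∈ Submodule.map Fr evenIOdd := Submodule.mem_map_of_mem hu
    rw [hmap] at this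
    obtain ⟨A, hA⟩ := this
    exact ⟨A, hA.trans (Fr_apply u)⟩
  have hclosed : ∀ u ∈ evenIOdd, ∀ v ∈ evenIOdd, u * v ∈ evenIOdd := by
    intro u hu v hv
    obtain ⟨A, hA⟩ := getA u hu
    obtain ⟨B, hB⟩ := getA v hv
    have hFuv : Fr (u * v) = phiL (A * B) := by
      rw [Fr_apply, map_mul, ← hA, ← hB, phiL_mul]
    have : Fr (u * v) ∈ LinearMap.range phiL := ⟨A * B, hFuv.symm⟩
    rw [← hmap] at this
    obtain ⟨w, hw, hweq⟩ := this
    have : w = u * v := F_inj (by rw [← Fr_apply, ← Fr_apply, hweq])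
    exact this ▸ hw
  refine ⟨hclosed, reL.comp Fr, ⟨?_, ?_, ?_⟩, ?_, ?_⟩
  · exact Set.mapsTo_univ _ _
  · intro u hu v hv huv
    obtain ⟨A, hA⟩ := getA u hu
    obtain ⟨B, hB⟩ := getA v hv
    simp only [LinearMap.comp_apply] at huv
    have hu' : reL (Fr u) = A := by rw [Fr_apply, ← hA]; exact reL_phiL A
    have hv' : reL (Fr v) = B := by rw [Fr_apply, ← hB]; exact reL_phiL B
    have hAB : A = B := by rw [← hu', ← hv', huv]
    exact F_inj (by rw [← hA, ← hB, hAB])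
  · intro M _
    have : phiL M ∈ LinearMap.range phiL := ⟨M, rfl⟩
    rw [← hmap] at this
    obtain ⟨u, hu, hueq⟩ := this
    refine ⟨u, hu, ?_⟩
    simp only [LinearMap.comp_apply]
    rw [hueq, reL_phiL]
  · intro u hu v hv
    obtain ⟨A, hA⟩ := getA u hu
    obtain ⟨B, hB⟩ := getA v hv
    have hFuv : Fr (u * v) = phiL (A * B) := by
      rw [Fr_apply, map_mul, ← hA, ← hB, phiL_mul]
    simp only [LinearMap.comp_apply]
    have h1 : reL (Fr u) = A := by rw [Fr_apply, ← hA]; exact reL_phiL A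
    have h2 : reL (Fr v) = B := by rw [Fr_apply, ← hB]; exact reL_phiL B
    rw [hFuv, reL_phiL, h1, h2]
  · simp only [LinearMap.comp_apply]
    rw [Fr_apply, map_one]
    show (1 : Matrix (Fin 4) (Fin 4) ℂ).map Complex.re = 1
    exact Matrix.map_one _ Complex.zero_re Complex.one_re
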